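/- Let f, g : I → ℝ be strictly monotone differentiable functions with nowhere vanishing first derivatives and p, q : I → ℝ_+^n. Assume that p_i/p_0 = q_i/q_0 on I for every i ∈ {1,…,n} and that p_0(x)(f(x) − f(y)) / (p_0(y) f'(y)) ≤ q_0(x)(g(x) − g(y)) / (q_0(y) g'(y)) for all x, y ∈ I. Then A_{f,p} is globally smaller than A_{g,q}, i.e., A_{f,p}(x_1,…,x_n) ≤ A_{g,q}(x_1,…,x_n) for all x_1,…,x_n ∈ I. -/

import Mathlib

open Set Function Real Filter

/-- The `n`-variable generalized Bajraktarević mean `A_{f,p}` on the interval `I`: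
`A_{f,p}(x) = f⁻¹((∑ pᵢ(xᵢ) f(xᵢ)) / (∑ pᵢ(xᵢ)))`. -/
noncomputable def bajMean {n : ℕ} (I : Set ℝ) (f : ℝ → ℝ) (p : Fin n → ℝ → ℝ)
    (x : Fin n → ℝ) : ℝ :=
  Function.invFunOn f I ((∑ i, p i (x i) * f (x i)) / (∑ i, p i (x i)))

/-- The `i`-th first-order partial derivative of `Φ : Iⁿ → ℝ`. -/
noncomputable def pder {n : ℕ} (Φ : (Fin n → ℝ) → ℝ) (i : Fin n) (y : Fin n → ℝ) : ℝ :=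
  deriv (fun t => Φ (Function.update y i t)) (y i)

/-- The second-order partial derivative `∂ᵢ∂ⱼΦ`. -/
noncomputable def pder2 {n : ℕ} (Φ : (Fin n → ℝ) → ℝ) (i j : Fin n) :
    (Fin n → ℝ) → ℝ :=
  pder (pder Φ j) i

/-- `M` is locally smaller than `N`: there is an open set `U ⊆ Iⁿ` containing the
diagonal of `Iⁿ` on which `M ≤ N`. -/
def LocallySmaller {n : ℕ} (I : Set ℝ) (M N : (Fin n → ℝ) → ℝ) : Prop :=
  ∃ U : Set (Fin n → ℝ), IsOpen U ∧ U ⊆ {x | ∀ i, x i ∈ I} ∧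
    (∀ x ∈ I, (fun _ => x) ∈ U) ∧ ∀ x ∈ U, M x ≤ N x

lemma aux_deriv_pos {f : ℝ → ℝ} {I : Set ℝ} (hI : IsOpen I) (hmono : StrictMonoOn f I)
    {y c : ℝ} (hy : y ∈ I) (hd : HasDerivAt f c y) (hc : c ≠ 0) : 0 < c := by
  have htend : Tendsto (slope f y) (nhdsWithin y (Set.Ioi y)) (nhds c) :=
    (hasDerivAt_iff_tendsto_slope.mp hd).mono_left
      (nhdsWithin_mono _ (fun z hz => ne_of_gt hz))
  have hmem : ∀ᶠ z in nhdsWithin y (Set.Ioi y), z ∈ I :=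
    eventually_nhdsWithin_of_eventually_nhds (hI.eventually_mem hy)
  have hnn : ∀ᶠ z in nhdsWithin y (Set.Ioi y), 0 ≤ slope f y z := by
    filter_upwards [hmem, self_mem_nhdsWithin] with z hzI hzy
    have hzy' : y < z := hzy
    have : 0 ≤ (f z - f y) / (z - y) :=
      div_nonneg (sub_nonneg.mpr (hmono hy hzI hzy').le) (sub_nonneg.mpr hzy'.le)
    simpa [slope_def_field] using this
  have h0 : 0 ≤ c := ge_of_tendsto htend hnn
  exact lt_of_le_of_ne h0 (Ne.symm hc)

lemma aux_deriv_neg {f : ℝ → ℝ} {I : Set ℝ} (hI : IsOpen I) (hanti : StrictAntiOn f I)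
    {y c : ℝ} (hy : y ∈ I) (hd : HasDerivAt f c y) (hc : c ≠ 0) : c < 0 := by
  have hmono : StrictMonoOn (fun t => -f t) I := fun a ha b hb hab =>
    neg_lt_neg (hanti ha hb hab)
  have := aux_deriv_pos hI hmono hy hd.neg (neg_ne_zero.mpr hc)
  linarith

/-- Value of a positively-weighted mean lies in the image of the interval. -/
lemma aux_mean_mem {n : ℕ} (hn : 1 ≤ n) {I : Set ℝ} (hIopen : IsOpen I)
    (hIconn : I.OrdConnected) {g g' : ℝ → ℝ}
    (hg : ∀ x ∈ I, HasDerivAt g (g' x) x)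
    {q : Fin n → ℝ → ℝ} (hq : ∀ i, ∀ x ∈ I, 0 < q i x)
    {x : Fin n → ℝ} (hx : ∀ i, x i ∈ I) :
    ∃ a ∈ I, g a = (∑ i, q i (x i) * g (x i)) / (∑ i, q i (x i)) := by
  haveI : Nonempty (Fin n) := ⟨⟨0, hn⟩⟩
  have hSq : 0 < ∑ i, q i (x i) :=
    Finset.sum_pos (fun i _ => hq i (x i) (hx i)) Finset.univ_nonempty
  set v := (∑ i, q i (x i) * g (x i)) / (∑ i, q i (x i)) with hv
  have hcont : ContinuousOn g I := fun z hz => (hg z hz).continuousAt.continuousWithinAt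
  have himg : (g '' I).OrdConnected :=
    (hIconn.isPreconnected.image g hcont).ordConnected
  obtain ⟨j, -, hj⟩ := Finset.exists_min_image Finset.univ (fun i => g (x i)) Finset.univ_nonempty
  obtain ⟨k, -, hk⟩ := Finset.exists_max_image Finset.univ (fun i => g (x i)) Finset.univ_nonempty
  have hlow : g (x j) ≤ v := by
    rw [hv, le_div_iff₀ hSq, Finset.mul_sum]
    refine Finset.sum_le_sum fun i _ => ?_
    have := hj i (Finset.mem_univ i)
    nlinarith [hq i (x i) (hx i)]
  have hhigh : v ≤ g (x k) := by
    rw [hv, div_le_iff₀ hSq, Finset.mul_sum]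
    refine Finset.sum_le_sum fun i _ => ?_
    have := hk i (Finset.mem_univ i)
    nlinarith [hq i (x i) (hx i)]
  have : v ∈ g '' I := himg.out ⟨x j, hx j, rfl⟩ ⟨x k, hx k, rfl⟩ ⟨hlow, hhigh⟩
  exact this.imp fun a ⟨ha, he⟩ => ⟨ha, he⟩

/-- Theorem 2 (global comparison): if `f, g` are strictly monotone differentiable with
nonvanishing first derivatives, `p, q : I → ℝ₊ⁿ`, `pᵢ/p₀ = qᵢ/q₀` on `I` for all `i`,
and `p₀(x)(f(x)-f(y))/(p₀(y)f'(y)) ≤ q₀(x)(g(x)-g(y))/(q₀(y)g'(y))` for all `x, y ∈ I`,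
then `A_{f,p}` is globally smaller than `A_{g,q}`. -/
theorem stmt13 {n : ℕ} (hn : 1 ≤ n) (I : Set ℝ) (hIopen : IsOpen I)
    (hIconn : I.OrdConnected) (hIne : I.Nonempty)
    (f f' g g' : ℝ → ℝ) (p q : Fin n → ℝ → ℝ)
    (hfmono : StrictMonoOn f I ∨ StrictAntiOn f I)
    (hgmono : StrictMonoOn g I ∨ StrictAntiOn g I)
    (hf : ∀ x ∈ I, HasDerivAt f (f' x) x) (hf'0 : ∀ x ∈ I, f' x ≠ 0)
    (hg : ∀ x ∈ I, HasDerivAt g (g' x) x) (hg'0 : ∀ x ∈ I, g' x ≠ 0)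
    (hp : ∀ i, ∀ x ∈ I, 0 < p i x) (hq : ∀ i, ∀ x ∈ I, 0 < q i x)
    (hratio : ∀ i : Fin n, ∀ x ∈ I, p i x / (∑ j, p j x) = q i x / (∑ j, q j x))
    (hkey : ∀ x ∈ I, ∀ y ∈ I,
      (∑ j, p j x) * (f x - f y) / ((∑ j, p j y) * f' y) ≤
        (∑ j, q j x) * (g x - g y) / ((∑ j, q j y) * g' y)) :
    ∀ x : Fin n → ℝ, (∀ i, x i ∈ I) → bajMean I f p x ≤ bajMean I g q x := by
  intro x hx
  haveI : Nonempty (Fin n) := ⟨⟨0, hn⟩⟩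
  have hSp : 0 < ∑ i, p i (x i) :=
    Finset.sum_pos (fun i _ => hp i (x i) (hx i)) Finset.univ_nonempty
  have hSq : 0 < ∑ i, q i (x i) :=
    Finset.sum_pos (fun i _ => hq i (x i) (hx i)) Finset.univ_nonempty
  set u := (∑ i, p i (x i) * f (x i)) / (∑ i, p i (x i)) with hu
  set v := (∑ i, q i (x i) * g (x i)) / (∑ i, q i (x i)) with hv
  have hfex : ∃ a ∈ I, f a = u := aux_mean_mem hn hIopen hIconn hf hp hx
  have hgex : ∃ a ∈ I, g a = v := aux_mean_mem hn hIopen hIconn hg hq hx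
  set z := Function.invFunOn f I u with hz
  set y := Function.invFunOn g I v with hy
  have hzI : z ∈ I := Function.invFunOn_mem hfex
  have hyI : y ∈ I := Function.invFunOn_mem hgex
  have hfz : f z = u := Function.invFunOn_eq hfex
  have hgy : g y = v := Function.invFunOn_eq hgex
  have hgoal : bajMean I f p x = z ∧ bajMean I g q x = y := ⟨rfl, rfl⟩
  -- positivity of the pointwise sums
  have hpx : ∀ t ∈ I, (0:ℝ) < ∑ j, p j t := fun t ht =>
    Finset.sum_pos (fun j _ => hp j t ht) Finset.univ_nonempty
  have hqx : ∀ t ∈ I, (0:ℝ) < ∑ j, q j t := fun t ht =>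
    Finset.sum_pos (fun j _ => hq j t ht) Finset.univ_nonempty
  -- key termwise inequality
  have hterm : ∀ i : Fin n,
      p i (x i) * (f (x i) - f y) / ((∑ j, p j y) * f' y) ≤
        q i (x i) * (g (x i) - g y) / ((∑ j, q j y) * g' y) := by
    intro i
    have hk := hkey (x i) (hx i) y hyI
    set w : ℝ := p i (x i) / (∑ j, p j (x i)) with hw
    have hw' : w = q i (x i) / (∑ j, q j (x i)) := hratio i (x i) (hx i)
    have hwpos : 0 ≤ w := le_of_lt (div_pos (hp i (x i) (hx i)) (hpx (x i) (hx i)))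
    have h1 := mul_le_mul_of_nonneg_left hk hwpos
    have e1 : w * ((∑ j, p j (x i)) * (f (x i) - f y) / ((∑ j, p j y) * f' y)) =
        p i (x i) * (f (x i) - f y) / ((∑ j, p j y) * f' y) := by
      have : w * (∑ j, p j (x i)) = p i (x i) :=
        div_mul_cancel₀ _ (ne_of_gt (hpx (x i) (hx i)))
      calc w * ((∑ j, p j (x i)) * (f (x i) - f y) / ((∑ j, p j y) * f' y))
          = (w * (∑ j, p j (x i))) * (f (x i) - f y) / ((∑ j, p j y) * f' y) := by ring
        _ = p i (x i) * (f (x i) - f y) / ((∑ j, p j y) * f' y) := by rw [this]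
    have e2 : w * ((∑ j, q j (x i)) * (g (x i) - g y) / ((∑ j, q j y) * g' y)) =
        q i (x i) * (g (x i) - g y) / ((∑ j, q j y) * g' y) := by
      have : w * (∑ j, q j (x i)) = q i (x i) := by
        rw [hw']; exact div_mul_cancel₀ _ (ne_of_gt (hqx (x i) (hx i)))
      calc w * ((∑ j, q j (x i)) * (g (x i) - g y) / ((∑ j, q j y) * g' y))
          = (w * (∑ j, q j (x i))) * (g (x i) - g y) / ((∑ j, q j y) * g' y) := by ring
        _ = q i (x i) * (g (x i) - g y) / ((∑ j, q j y) * g' y) := by rw [this]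
    calc p i (x i) * (f (x i) - f y) / ((∑ j, p j y) * f' y) = _ := e1.symm
      _ ≤ w * ((∑ j, q j (x i)) * (g (x i) - g y) / ((∑ j, q j y) * g' y)) := h1
      _ = _ := e2
  have hsum := Finset.sum_le_sum (fun i (_ : i ∈ Finset.univ) => hterm i)
  -- compute both sums
  have hnump : ∑ i, p i (x i) * (f (x i) - f y) = (∑ i, p i (x i)) * (u - f y) := by
    have h1 : (∑ i, p i (x i)) * u = ∑ i, p i (x i) * f (x i) := by
      rw [hu, mul_div_cancel₀ _ (ne_of_gt hSp)]
    simp only [mul_sub, Finset.sum_sub_distrib, Finset.sum_mul, h1]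
  have hnumq : ∑ i, q i (x i) * (g (x i) - g y) = 0 := by
    have h1 : (∑ i, q i (x i)) * g y = ∑ i, q i (x i) * g (x i) := by
      rw [hgy, hv, mul_div_cancel₀ _ (ne_of_gt hSq)]
    simp only [mul_sub, Finset.sum_sub_distrib, ← Finset.sum_mul, h1, sub_self]
  rw [← Finset.sum_div, ← Finset.sum_div, hnump, hnumq, zero_div] at hsum
  -- hsum : (∑ p) * (u - f y) / ((∑ p j y) * f' y) ≤ 0
  rcases hfmono with hmono | hanti
  · have hf'pos : 0 < f' y := aux_deriv_pos hIopen hmono hyI (hf y hyI) (hf'0 y hyI)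
    have hden : 0 < (∑ j, p j y) * f' y := mul_pos (hpx y hyI) hf'pos
    have hle : u ≤ f y := by
      by_contra hlt
      push_neg at hlt
      have : 0 < (∑ i, p i (x i)) * (u - f y) / ((∑ j, p j y) * f' y) :=
        div_pos (mul_pos hSp (by linarith)) hden
      linarith
    rw [← hfz] at hle
    exact (hmono.le_iff_le hzI hyI).mp hle
  · have hf'neg : f' y < 0 := aux_deriv_neg hIopen hanti hyI (hf y hyI) (hf'0 y hyI)
    have hden : (∑ j, p j y) * f' y < 0 := mul_neg_of_pos_of_neg (hpx y hyI) hf'neg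
    have hle : f y ≤ u := by
      by_contra hlt
      push_neg at hlt
      have : 0 < (∑ i, p i (x i)) * (u - f y) / ((∑ j, p j y) * f' y) :=
        div_pos_of_neg_of_neg (by nlinarith) hden
      linarith
    rw [← hfz] at hle
    exact (hanti.le_iff_ge hyI hzI).mp hle
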